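/- Let G = (V,E) be a finite simple undirected graph with positive edge weights and unique shortest paths, let s, v, x, y be vertices with d_G(v,x) ≤ d_G(s,v), d_G(x,y) ≤ 2 · d_G(s,v), and d_G(y,s) ≤ 4 · d_G(s,v), and let f ∈ E be an edge such that s and v are connected in G − f, f lies on π(s,v), f lies on π(v,x), f lies on π(x,y), and f lies on π(y,s). Then d_{G−f}(v,x) + d_{G−f}(x,y) + d_{G−f}(y,s) ≤ 13 · d_{G−f}(s,v). (Case 8 in the proof of Lemma 4.1.) -/

import Mathlib

open scoped ENNReal

variable {V : Type*}

/-- The total weight of a walk: the sum of the weights of its edges (in `ℝ≥0∞`). -/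
noncomputable def walkWeight {G : SimpleGraph V} (wt : Sym2 V → NNReal)
    {u v : V} (p : G.Walk u v) : ℝ≥0∞ :=
  (p.edges.map (fun e => (wt e : ℝ≥0∞))).sum

/-- The weighted shortest-path distance: the infimum over all walks from `u` to `v`
of their total weight (in `ℝ≥0∞`, so it is `∞` if `u` and `v` are not connected). -/
noncomputable def wdist (G : SimpleGraph V) (wt : Sym2 V → NNReal) (u v : V) : ℝ≥0∞ :=
  ⨅ p : G.Walk u v, walkWeight wt p

/-- `G` has unique shortest paths: for every pair of connected vertices there is exactly
one walk of minimum total weight. -/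
def HasUniqueShortestPaths (G : SimpleGraph V) (wt : Sym2 V → NNReal) : Prop :=
  ∀ u v : V, G.Reachable u v →
    ∃! p : G.Walk u v, walkWeight wt p = wdist G wt u v

section AuxLemmas
open SimpleGraph
variable {G : SimpleGraph V} (wt : Sym2 V → NNReal)

lemma walkWeight_nil {u : V} : walkWeight wt (Walk.nil : G.Walk u u) = 0 := rfl

lemma walkWeight_cons {u v w : V} (h : G.Adj u v) (p : G.Walk v w) :
    walkWeight wt (Walk.cons h p) = wt s(u, v) + walkWeight wt p := by
  simp [walkWeight]

lemma walkWeight_append {u v w : V} (p : G.Walk u v) (q : G.Walk v w) :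
    walkWeight wt (p.append q) = walkWeight wt p + walkWeight wt q := by
  simp [walkWeight, SimpleGraph.Walk.edges_append]

lemma walkWeight_reverse {u v : V} (p : G.Walk u v) :
    walkWeight wt p.reverse = walkWeight wt p := by
  simp [walkWeight, SimpleGraph.Walk.edges_reverse, List.sum_reverse]

lemma walkWeight_ne_top {u v : V} (p : G.Walk u v) : walkWeight wt p ≠ ⊤ := by
  induction p with
  | nil => simp [walkWeight_nil]
  | cons h p ih => rw [walkWeight_cons]; exact ENNReal.add_ne_top.mpr ⟨ENNReal.coe_ne_top, ih⟩

lemma wdist_le_walkWeight {u v : V} (p : G.Walk u v) :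
    wdist G wt u v ≤ walkWeight wt p := iInf_le _ p

lemma wdist_symm (u v : V) : wdist G wt u v = wdist G wt v u := by
  refine le_antisymm ?_ ?_ <;>
    exact le_iInf fun p => iInf_le_of_le p.reverse (walkWeight_reverse wt p).le

lemma wdist_triangle (u m w : V) :
    wdist G wt u w ≤ wdist G wt u m + wdist G wt m w := by
  simp only [wdist]
  rw [ENNReal.iInf_add]
  refine le_iInf fun p => ?_
  rw [ENNReal.add_iInf]
  refine le_iInf fun q => ?_
  exact iInf_le_of_le (p.append q) (walkWeight_append wt p q).le

lemma walkWeight_transfer {u v : V} (p : G.Walk u v) {H : SimpleGraph V}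
    (hp : ∀ e ∈ p.edges, e ∈ H.edgeSet) :
    walkWeight wt (p.transfer H hp) = walkWeight wt p := by
  simp [walkWeight, SimpleGraph.Walk.edges_transfer]

lemma wdist_le_wdist_deleteEdges (S : Set (Sym2 V)) (u v : V) :
    wdist G wt u v ≤ wdist (G.deleteEdges S) wt u v := by
  refine le_iInf fun p => ?_
  refine iInf_le_of_le (p.transfer G fun e he => ?_) (walkWeight_transfer wt p _).le
  exact (SimpleGraph.edgeSet_subset_edgeSet.mpr (G.deleteEdges_le (s := S)))
    (p.edges_subset_edgeSet he)

lemma wdist_deleteEdges_le_of_not_mem {f : Sym2 V} {u w : V} (p : G.Walk u w)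
    (hp : f ∉ p.edges) :
    wdist (G.deleteEdges {f}) wt u w ≤ walkWeight wt p := by
  refine iInf_le_of_le (p.toDeleteEdges {f} fun e he hes => hp (hes ▸ he)) ?_
  exact (walkWeight_transfer wt p _).le

lemma wdist_self (u : V) : wdist G wt u u = 0 :=
  le_antisymm (iInf_le_of_le Walk.nil (walkWeight_nil wt).le) zero_le

lemma wdist_step {G' : SimpleGraph V} {u u' : V} (h : G'.Adj u u') (z : V) :
    wdist G' wt u z ≤ wt s(u, u') + wdist G' wt u' z := by
  simp only [wdist]
  rw [ENNReal.add_iInf]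
  refine le_iInf fun r => ?_
  exact iInf_le_of_le (Walk.cons h r) (walkWeight_cons wt h r).le

lemma wdist_split (f : Sym2 V) {u w : V} (p : G.Walk u w) (hmem : f ∈ p.edges) :
    (∃ a b, f = s(a, b) ∧
      wdist (G.deleteEdges {f}) wt u a + wdist (G.deleteEdges {f}) wt b w + wt f
        ≤ walkWeight wt p)
    ∨ wdist (G.deleteEdges {f}) wt u w + wt f ≤ walkWeight wt p := by
  induction p with
  | nil => simp at hmem
  | @cons u u' w h p' ih =>
    rw [walkWeight_cons wt h p']
    by_cases hfe : f = s(u, u')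
    · by_cases hp' : f ∈ p'.edges
      · rcases ih hp' with ⟨a, b, hab, hle⟩ | hle
        · rcases Sym2.eq_iff.mp (hfe.symm.trans hab) with ⟨h1, h2⟩ | ⟨h1, h2⟩
          · -- a = u, b = u'
            subst h1; subst h2
            left
            refine ⟨u, u', hfe, ?_⟩
            have h3 : wdist (G.deleteEdges {f}) wt u' w + wt f ≤ walkWeight wt p' :=
              le_trans (add_le_add_left le_add_self _) hle
            calc wdist (G.deleteEdges {f}) wt u u + wdist (G.deleteEdges {f}) wt u' w + wt f
                = wdist (G.deleteEdges {f}) wt u' w + wt f := by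
                  rw [wdist_self, zero_add]
              _ ≤ walkWeight wt p' := h3
              _ ≤ wt s(u, u') + walkWeight wt p' := le_add_self
          · -- a = u', b = u
            subst h1; subst h2
            right
            have h3 : wdist (G.deleteEdges {f}) wt u w + wt f ≤ walkWeight wt p' :=
              le_trans (add_le_add_left le_add_self _) hle
            exact h3.trans le_add_self
        · left
          refine ⟨u, u', hfe, ?_⟩
          calc wdist (G.deleteEdges {f}) wt u u + wdist (G.deleteEdges {f}) wt u' w + wt f
              = wdist (G.deleteEdges {f}) wt u' w + wt f := by rw [wdist_self, zero_add]
            _ ≤ walkWeight wt p' := hle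
            _ ≤ wt s(u, u') + walkWeight wt p' := le_add_self
      · left
        refine ⟨u, u', hfe, ?_⟩
        have h3 : wdist (G.deleteEdges {f}) wt u' w ≤ walkWeight wt p' :=
          wdist_deleteEdges_le_of_not_mem wt p' hp'
        calc wdist (G.deleteEdges {f}) wt u u + wdist (G.deleteEdges {f}) wt u' w + wt f
            = wdist (G.deleteEdges {f}) wt u' w + wt f := by rw [wdist_self, zero_add]
          _ ≤ walkWeight wt p' + wt f := by gcongr
          _ = wt s(u, u') + walkWeight wt p' := by rw [add_comm, hfe]
    · have hp' : f ∈ p'.edges := by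
        rcases List.mem_cons.mp (by simpa using hmem) with h1 | h1
        · exact absurd h1 hfe
        · exact h1
      have hadj : (G.deleteEdges {f}).Adj u u' := by
        rw [SimpleGraph.deleteEdges_adj]
        exact ⟨h, by simpa using fun hh => hfe hh.symm⟩
      rcases ih hp' with ⟨a, b, hab, hle⟩ | hle
      · left
        refine ⟨a, b, hab, ?_⟩
        calc wdist (G.deleteEdges {f}) wt u a + wdist (G.deleteEdges {f}) wt b w + wt f
            ≤ (wt s(u, u') + wdist (G.deleteEdges {f}) wt u' a)
              + wdist (G.deleteEdges {f}) wt b w + wt f := by gcongr; exact wdist_step wt hadj a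
          _ = wt s(u, u')
              + (wdist (G.deleteEdges {f}) wt u' a + wdist (G.deleteEdges {f}) wt b w + wt f) := by
              ring
          _ ≤ wt s(u, u') + walkWeight wt p' := by gcongr
      · right
        calc wdist (G.deleteEdges {f}) wt u w + wt f
            ≤ (wt s(u, u') + wdist (G.deleteEdges {f}) wt u' w) + wt f := by
              gcongr; exact wdist_step wt hadj w
          _ = wt s(u, u') + (wdist (G.deleteEdges {f}) wt u' w + wt f) := by ring
          _ ≤ wt s(u, u') + walkWeight wt p' := by gcongr

end AuxLemmas

theorem stmt18 [Fintype V] [DecidableEq V] (G : SimpleGraph V) (wt : Sym2 V → NNReal)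
    (hwt : ∀ e ∈ G.edgeSet, 0 < wt e)
    (huniq : HasUniqueShortestPaths G wt)
    (s v x y : V)
    (hvx : wdist G wt v x ≤ wdist G wt s v)
    (hxy : wdist G wt x y ≤ 2 * wdist G wt s v)
    (hys : wdist G wt y s ≤ 4 * wdist G wt s v)
    (f : Sym2 V) (hf : f ∈ G.edgeSet)
    (hconn : (G.deleteEdges {f}).Reachable s v)
    (qsv : G.Walk s v) (hqsv : walkWeight wt qsv = wdist G wt s v)
    (qvx : G.Walk v x) (hqvx : walkWeight wt qvx = wdist G wt v x)
    (qxy : G.Walk x y) (hqxy : walkWeight wt qxy = wdist G wt x y)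
    (qys : G.Walk y s) (hqys : walkWeight wt qys = wdist G wt y s)
    (hf1 : f ∈ qsv.edges) (hf2 : f ∈ qvx.edges)
    (hf3 : f ∈ qxy.edges) (hf4 : f ∈ qys.edges) :
    wdist (G.deleteEdges {f}) wt v x + wdist (G.deleteEdges {f}) wt x y +
        wdist (G.deleteEdges {f}) wt y s ≤
      13 * wdist (G.deleteEdges {f}) wt s v := by
  set G' := G.deleteEdges {f} with hG'
  set D := wdist G wt s v with hD
  set D' := wdist G' wt s v with hD'
  have hDD' : D ≤ D' := wdist_le_wdist_deleteEdges wt {f} s v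
  have hD'top : D' ≠ ⊤ := by
    obtain ⟨p⟩ := hconn
    exact ne_top_of_le_ne_top (walkWeight_ne_top wt p) (wdist_le_walkWeight wt p)
  rcases wdist_split wt f qsv hf1 with ⟨a₀, b₀, hab₀, hle₀⟩ | hle₀
  · -- the main case
    have hsab : wdist G' wt s a₀ + wdist G' wt b₀ v ≤ D := by
      calc wdist G' wt s a₀ + wdist G' wt b₀ v
          ≤ wdist G' wt s a₀ + wdist G' wt b₀ v + wt f := le_add_self.trans_eq (add_comm _ _)
        _ ≤ walkWeight wt qsv := hle₀
        _ = D := hqsv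
    have h0 : wdist G' wt a₀ b₀ ≤ D + D' := by
      calc wdist G' wt a₀ b₀
          ≤ wdist G' wt a₀ s + wdist G' wt s b₀ := wdist_triangle wt a₀ s b₀
        _ ≤ wdist G' wt a₀ s + (wdist G' wt s v + wdist G' wt v b₀) := by
            gcongr; exact wdist_triangle wt s v b₀
        _ = (wdist G' wt s a₀ + wdist G' wt b₀ v) + D' := by
            rw [wdist_symm wt a₀ s, wdist_symm wt v b₀]; ring
        _ ≤ D + D' := by gcongr
    have key : ∀ a b : V, f = s(a, b) → wdist G' wt a b ≤ D + D' := by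
      intro a b hab
      rcases Sym2.eq_iff.mp (hab₀.symm.trans hab) with ⟨h1, h2⟩ | ⟨h1, h2⟩
      · rw [← h1, ← h2]; exact h0
      · rw [← h1, ← h2, wdist_symm]; exact h0
    have bound : ∀ {u w : V} (q : G.Walk u w), f ∈ q.edges →
        wdist G' wt u w ≤ walkWeight wt q + (D + D') := by
      intro u w q hq
      rcases wdist_split wt f q hq with ⟨a, b, hab, hle⟩ | hle
      · calc wdist G' wt u w
            ≤ wdist G' wt u a + wdist G' wt a w := wdist_triangle wt u a w
          _ ≤ wdist G' wt u a + (wdist G' wt a b + wdist G' wt b w) := by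
              gcongr; exact wdist_triangle wt a b w
          _ = (wdist G' wt u a + wdist G' wt b w) + wdist G' wt a b := by ring
          _ ≤ walkWeight wt q + (D + D') := by
              gcongr
              · calc wdist G' wt u a + wdist G' wt b w
                    ≤ wdist G' wt u a + wdist G' wt b w + wt f :=
                      le_add_self.trans_eq (add_comm _ _)
                  _ ≤ walkWeight wt q := hle
              · exact key a b hab
      · calc wdist G' wt u w ≤ wdist G' wt u w + wt f := le_add_self.trans_eq (add_comm _ _)
          _ ≤ walkWeight wt q := hle
          _ ≤ walkWeight wt q + (D + D') := le_self_add
    have b1 := bound qvx hf2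
    have b2 := bound qxy hf3
    have b3 := bound qys hf4
    rw [hqvx] at b1; rw [hqxy] at b2; rw [hqys] at b3
    calc wdist G' wt v x + wdist G' wt x y + wdist G' wt y s
        ≤ (wdist G wt v x + (D + D')) + (wdist G wt x y + (D + D'))
          + (wdist G wt y s + (D + D')) := by gcongr
      _ ≤ (D + (D + D')) + (2 * D + (D + D')) + (4 * D + (D + D')) := by gcongr
      _ = 10 * D + 3 * D' := by ring
      _ ≤ 10 * D' + 3 * D' := by gcongr
      _ = 13 * D' := by ring
  · -- impossible case: D' + wt f ≤ D ≤ D' with wt f > 0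
    exfalso
    have hlt : D' < D' + wt f :=
      ENNReal.lt_add_right hD'top (by exact_mod_cast (hwt f hf).ne')
    have : D' + wt f ≤ D' := by
      calc D' + wt f ≤ walkWeight wt qsv := hle₀
        _ = D := hqsv
        _ ≤ D' := hDD'
    exact absurd this hlt.not_ge
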